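/- Let U be the full group C*-algebra of the free group on generators {ẋ, x̄ : x ∈ X}, and define φ on the free *-algebra ℂ[X ∪ X*] by φ(x) = ẋ + x̄. Then φ is an injective *-homomorphism. -/

import Mathlib

/-!
We prove the Goodearl–Menal injectivity by factoring through the left regular
representation of the free group `F = FreeGroup (X ⊕ X)` on `ℓ²(F)`.
-/

noncomputable section
namespace GM
open FreeGroup
open scoped InnerProductSpace ENNReal

variable {X : Type}

def undec : X ⊕ X → X := Sum.elim id id

def pr (s : X ⊕ X) (b : Bool) : (X ⊕ X) × Bool :=
  ((if b then Sum.inl (undec s) else Sum.inr (undec s)), s.isLeft)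

def dec (q : (X ⊕ X) × Bool) : X ⊕ X :=
  if q.2 then Sum.inl (undec q.1) else Sum.inr (undec q.1)

@[simp] lemma dec_pr (s : X ⊕ X) (b : Bool) : dec (pr s b) = s := by
  cases s <;> cases b <;> simp [dec, pr, undec]

lemma eq_pr_of_dec_eq {h : (X ⊕ X) × Bool} {s : X ⊕ X} (hd : dec h = s) :
    h = pr s true ∨ h = pr s false := by
  obtain ⟨a, t⟩ := h
  cases a <;> cases t <;> cases s <;> simp_all [dec, pr, undec]

lemma pr_fst_ne (s s' : X ⊕ X) (b : Bool) : (pr s b).1 ≠ (pr s' (!b)).1 := by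
  cases b <;> simp [pr]

section Reduce
variable {α : Type} [DecidableEq α]

lemma length_reduce_le (L : List (α × Bool)) :
    (reduce L).length ≤ L.length :=
  (reduce.red (L := L)).sublist.length_le

lemma reduce_eq_of_length_eq {L : List (α × Bool)}
    (h : (reduce L).length = L.length) : reduce L = L :=
  (reduce.red (L := L)).sublist.eq_of_length h

lemma reduce_tail {h : α × Bool} {t : List (α × Bool)}
    (H : reduce (h :: t) = h :: t) : reduce t = t := by
  rw [reduce.cons] at H
  rcases ht : reduce t with _ | ⟨hd, tl⟩
  · rw [ht] at H
    dsimp only at H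
    simp only [List.cons.injEq] at H
    rw [← H.2]
  · rw [ht] at H
    dsimp only at H
    by_cases hc : h.1 = hd.1 ∧ h.2 = !hd.2
    · rw [if_pos hc] at H
      exfalso
      have h1 : (hd :: tl).length ≤ t.length := by rw [← ht]; exact length_reduce_le t
      have h2 : tl.length = t.length + 1 := by rw [H]; simp
      simp at h1; omega
    · rw [if_neg hc] at H
      simp only [List.cons.injEq] at H
      rw [← H.2, ← ht]

lemma toWord_inv_single_mul {q : α × Bool} {γ : FreeGroup α} {h : α × Bool}
    {t : List (α × Bool)} (hγ : γ.toWord = h :: t) :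
    ((mk [q])⁻¹ * γ).toWord = if h = q then t else ((q.1, !q.2) :: h :: t) := by
  have hred : reduce (h :: t) = h :: t := by rw [← hγ]; exact reduce_toWord γ
  have hγ' : γ = mk (h :: t) := by rw [← hγ, mk_toWord]
  have hinv : (mk [q] : FreeGroup α)⁻¹ = mk [(q.1, !q.2)] := by
    rw [inv_mk]; rfl
  by_cases hq : h = q
  · rw [if_pos hq, hγ', hq]
    have : (mk [q] : FreeGroup α)⁻¹ * mk (q :: t) = mk t := by
      have : (q :: t : List (α × Bool)) = [q] ++ t := rfl
      rw [this, ← mul_mk, ← mul_assoc, inv_mul_cancel, one_mul]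
    rw [this, toWord_mk]
    exact reduce_tail hred
  · rw [if_neg hq, hγ', hinv, mul_mk]
    show toWord (mk ((q.1, !q.2) :: h :: t)) = _
    rw [toWord_mk, reduce.cons, hred]
    dsimp only
    have : ¬((q.1, !q.2).1 = h.1 ∧ (q.1, !q.2).2 = !h.2) := by
      rintro ⟨h1, h2⟩
      exact hq (Prod.ext h1.symm (by simpa using h2.symm))
    rw [if_neg this]

end Reduce

noncomputable def gen (s : X ⊕ X) (b : Bool) : FreeGroup (X ⊕ X) := mk [pr s b]

noncomputable def Phi : FreeMonoid (X ⊕ X) →* MonoidAlgebra ℂ (FreeGroup (X ⊕ X)) :=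
  FreeMonoid.lift fun s =>
    MonoidAlgebra.single (gen s true) 1 + MonoidAlgebra.single (gen s false) 1

lemma Phi_cons (s : X ⊕ X) (w : List (X ⊕ X)) (γ : FreeGroup (X ⊕ X)) :
    (Phi (FreeMonoid.ofList (s :: w))).coeff γ =
      (Phi (FreeMonoid.ofList w)).coeff ((gen s true)⁻¹ * γ) +
        (Phi (FreeMonoid.ofList w)).coeff ((gen s false)⁻¹ * γ) := by
  rw [FreeMonoid.ofList_cons, _root_.map_mul]
  have : Phi (FreeMonoid.of s) =
      MonoidAlgebra.single (gen s true) 1 + MonoidAlgebra.single (gen s false) 1 :=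
    FreeMonoid.lift_eval_of _ s
  rw [this, add_mul, MonoidAlgebra.coeff_add, Finsupp.add_apply, MonoidAlgebra.coeff_single_mul_apply,
    MonoidAlgebra.coeff_single_mul_apply, one_mul, one_mul]

variable [DecidableEq (X ⊕ X)]

lemma coeff_eq_zero_of_lt_length :
    ∀ (w : List (X ⊕ X)) (γ : FreeGroup (X ⊕ X)), w.length < γ.toWord.length →
      (Phi (FreeMonoid.ofList w)).coeff γ = 0 := by
  intro w
  induction w with
  | nil =>
    intro γ hγ
    have hγ1 : γ ≠ 1 := by
      intro h; rw [h, toWord_one] at hγ; simp at hγ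
    show (Phi 1).coeff γ = 0
    rw [_root_.map_one, MonoidAlgebra.one_def, MonoidAlgebra.coeff_single, Finsupp.single_apply, if_neg (fun h => hγ1 h.symm)]
  | cons s w ih =>
    intro γ hγ
    rcases hl : γ.toWord with _ | ⟨h, t⟩
    · rw [hl] at hγ; simp at hγ
    rw [hl] at hγ
    simp only [List.length_cons] at hγ
    rw [Phi_cons]
    have key : ∀ b : Bool, (Phi (FreeMonoid.ofList w)).coeff ((gen s b)⁻¹ * γ) = 0 := by
      intro b
      apply ih
      rw [gen, toWord_inv_single_mul hl]
      split
      · omega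
      · simp only [List.length_cons]; omega
    rw [key true, key false, add_zero]

lemma coeff_eq_of_length_eq :
    ∀ (w : List (X ⊕ X)) (γ : FreeGroup (X ⊕ X)), γ.toWord.length = w.length →
      (Phi (FreeMonoid.ofList w)).coeff γ = if γ.toWord.map dec = w then 1 else 0 := by
  intro w
  induction w with
  | nil =>
    intro γ hγ
    have hγ1 : γ = 1 := toWord_eq_nil_iff.mp (List.length_eq_zero_iff.mp hγ)
    subst hγ1
    show (Phi 1).coeff 1 = _
    rw [show Phi (1 : FreeMonoid (X ⊕ X)) = 1 from _root_.map_one Phi,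
      MonoidAlgebra.one_def, MonoidAlgebra.coeff_single, Finsupp.single_apply, toWord_one]
    simp
  | cons s w ih =>
    intro γ hγ
    rcases hl : γ.toWord with _ | ⟨h, t⟩
    · rw [hl] at hγ; simp at hγ
    rw [hl] at hγ
    simp only [List.length_cons, Nat.add_right_cancel_iff] at hγ
    have htred : reduce t = t := reduce_tail (by rw [← hl]; exact reduce_toWord γ)
    have htWord : (mk t : FreeGroup (X ⊕ X)).toWord = t := by rw [toWord_mk, htred]
    rw [Phi_cons]
    -- the term for decoration `b` when the head matches
    have hmatch : ∀ b : Bool, h = pr s b →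
        (Phi (FreeMonoid.ofList w)).coeff ((gen s b)⁻¹ * γ) =
          if t.map dec = w then 1 else 0 := by
      intro b hb
      have : ((gen s b)⁻¹ * γ).toWord = t := by
        rw [gen, toWord_inv_single_mul hl, if_pos hb]
      rw [ih _ (by rw [this, hγ]), this]
    have hmiss : ∀ b : Bool, h ≠ pr s b →
        (Phi (FreeMonoid.ofList w)).coeff ((gen s b)⁻¹ * γ) = 0 := by
      intro b hb
      apply coeff_eq_zero_of_lt_length
      rw [gen, toWord_inv_single_mul hl, if_neg hb]
      simp; omega
    by_cases h1 : h = pr s true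
    · have h2 : h ≠ pr s false := by
        rw [h1]; intro hh
        exact pr_fst_ne s s true (by rw [hh]; rfl)
      rw [hmatch true h1, hmiss false h2, add_zero]
      simp only [List.map_cons, h1, dec_pr, List.cons.injEq, true_and]
    · by_cases h2 : h = pr s false
      · rw [hmatch false h2, hmiss true h1, zero_add]
        simp only [List.map_cons, h2, dec_pr, List.cons.injEq, true_and]
      · rw [hmiss true h1, hmiss false h2, add_zero]
        have : dec h ≠ s := by
          intro hd
          rcases eq_pr_of_dec_eq hd with hh | hh
          exacts [h1 hh, h2 hh]
        rw [if_neg]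
        simp only [List.map_cons, List.cons.injEq]
        exact fun hc => this hc.1


def alt : Bool → List (X ⊕ X) → List ((X ⊕ X) × Bool)
  | _, [] => []
  | b, s :: w => pr s b :: alt (!b) w

omit [DecidableEq (X ⊕ X)] in
@[simp] lemma alt_length : ∀ (b : Bool) (w : List (X ⊕ X)), (alt b w).length = w.length
  | _, [] => rfl
  | b, s :: w => by simp [alt, alt_length (!b) w]

omit [DecidableEq (X ⊕ X)] in
@[simp] lemma alt_map_dec : ∀ (b : Bool) (w : List (X ⊕ X)), (alt b w).map dec = w
  | _, [] => rfl
  | b, s :: w => by simp [alt, alt_map_dec (!b) w]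

lemma alt_reduced (w : List (X ⊕ X)) : ∀ b : Bool, reduce (alt b w) = alt b w := by
  induction w with
  | nil => intro b; rfl
  | cons s w ih =>
    intro b
    show reduce (pr s b :: alt (!b) w) = _
    rw [reduce.cons, ih (!b)]
    rcases w with _ | ⟨s', w'⟩
    · rfl
    · show (if (pr s b).1 = (pr s' (!b)).1 ∧ _ then _ else _) = _
      rw [if_neg]
      · rfl
      · rintro ⟨h1, -⟩
        exact pr_fst_ne s s' b h1

lemma liftPhi_injective :
    Function.Injective
      (MonoidAlgebra.lift ℂ (MonoidAlgebra ℂ (FreeGroup (X ⊕ X))) (FreeMonoid (X ⊕ X)) Phi) := by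
  rw [injective_iff_map_eq_zero]
  intro P hP
  by_contra hne
  have hsupp : P.coeff.support.Nonempty :=
    Finsupp.support_nonempty_iff.mpr (by simpa using hne)
  obtain ⟨w₀, hw₀, hmax⟩ :=
    P.coeff.support.exists_max_image (fun w => (FreeMonoid.toList w).length) hsupp
  set γ₀ : FreeGroup (X ⊕ X) := mk (alt true (FreeMonoid.toList w₀)) with hγ₀def
  have hγ₀ : γ₀.toWord = alt true (FreeMonoid.toList w₀) := by
    rw [hγ₀def, toWord_mk, alt_reduced]
  have hcoeff : (MonoidAlgebra.lift ℂ (MonoidAlgebra ℂ (FreeGroup (X ⊕ X)))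
      (FreeMonoid (X ⊕ X)) Phi P).coeff γ₀ = P.coeff w₀ := by
    rw [MonoidAlgebra.lift_apply]
    rw [Finsupp.sum, MonoidAlgebra.coeff_sum, Finsupp.finset_sum_apply]
    rw [Finset.sum_eq_single_of_mem w₀ hw₀]
    · have : (Phi (FreeMonoid.ofList (FreeMonoid.toList w₀))).coeff γ₀ = 1 := by
        rw [coeff_eq_of_length_eq _ _ (by rw [hγ₀, alt_length]), hγ₀, alt_map_dec, if_pos rfl]
      rw [FreeMonoid.ofList_toList] at this
      rw [MonoidAlgebra.coeff_smul, Finsupp.smul_apply, this, smul_eq_mul, mul_one]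
    · intro w hw hne'
      rw [MonoidAlgebra.coeff_smul, Finsupp.smul_apply]
      rcases lt_or_eq_of_le (hmax w hw) with hlt | heq
      · rw [show (Phi w).coeff γ₀ = 0 from ?_, smul_zero]
        rw [← FreeMonoid.ofList_toList w]
        exact coeff_eq_zero_of_lt_length _ _ (by rw [hγ₀, alt_length]; exact hlt)
      · rw [show (Phi w).coeff γ₀ = 0 from ?_, smul_zero]
        rw [← FreeMonoid.ofList_toList w]
        rw [coeff_eq_of_length_eq _ _ (by rw [hγ₀, alt_length]; exact heq.symm)]
        rw [hγ₀, alt_map_dec, if_neg]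
        intro hc
        exact hne' (congrArg FreeMonoid.ofList hc.symm)
  rw [hP] at hcoeff
  exact absurd hcoeff.symm (by simpa using Finsupp.mem_support_iff.mp hw₀)



section Rep

variable {G : Type} [Group G]

abbrev Hs (G : Type) := lp (fun _ : G => ℂ) 2

lemma two_toReal_pos : 0 < (2 : ℝ≥0∞).toReal := by norm_num

set_option maxHeartbeats 1000000 in
lemma memℓp_shift (g : G) (f : ∀ _ : G, ℂ) (hf : Memℓp f 2) :
    Memℓp (fun h => f (g⁻¹ * h)) 2 := by
  apply memℓp_gen
  have h1 := (memℓp_gen_iff two_toReal_pos).mp hf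
  exact ((Equiv.mulLeft g⁻¹).summable_iff).mpr h1

/-- left translation as a linear map on `ℓ²(G)` -/
def shiftL (g : G) : Hs G →ₗ[ℂ] Hs G where
  toFun f := ⟨fun h => f (g⁻¹ * h), memℓp_shift g f (lp.memℓp f)⟩
  map_add' f₁ f₂ := by
    apply lp.ext
    funext h
    show (↑(f₁ + f₂) : ∀ _ : G, ℂ) (g⁻¹ * h) = _
    rw [lp.coeFn_add]
    rfl
  map_smul' c f := by
    apply lp.ext
    funext h
    show (↑(c • f) : ∀ _ : G, ℂ) (g⁻¹ * h) = _
    rw [lp.coeFn_smul]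
    rfl

lemma norm_shiftL (g : G) (f : Hs G) : ‖shiftL g f‖ = ‖f‖ := by
  have h2 := two_toReal_pos
  refine Real.rpow_left_injOn h2.ne' (norm_nonneg _) (norm_nonneg _) ?_
  show ‖shiftL g f‖ ^ (2:ℝ≥0∞).toReal = ‖f‖ ^ (2:ℝ≥0∞).toReal
  rw [lp.norm_rpow_eq_tsum h2, lp.norm_rpow_eq_tsum h2]
  exact (Equiv.mulLeft g⁻¹).tsum_eq fun i => ‖(f : ∀ _ : G, ℂ) i‖ ^ (2:ℝ≥0∞).toReal

/-- left translation as a continuous linear map on `ℓ²(G)` -/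
def T (g : G) : Hs G →L[ℂ] Hs G :=
  LinearMap.mkContinuous (shiftL g) 1 fun f => by rw [norm_shiftL, one_mul]

@[simp] lemma T_apply (g : G) (f : Hs G) (h : G) :
    (T g f : ∀ _ : G, ℂ) h = (f : ∀ _ : G, ℂ) (g⁻¹ * h) := rfl

@[simp] lemma T_one : T (1 : G) = 1 := by
  refine ContinuousLinearMap.ext fun f => lp.ext ?_
  funext h
  simp

lemma T_mul (g g' : G) : T g * T g' = T (g * g') := by
  refine ContinuousLinearMap.ext fun f => lp.ext ?_
  funext h
  show (T g (T g' f) : ∀ _ : G, ℂ) h = _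
  simp [mul_assoc]

lemma inner_T (g : G) (x y : Hs G) : ⟪T g x, T g y⟫_ℂ = ⟪x, y⟫_ℂ := by
  rw [lp.inner_eq_tsum, lp.inner_eq_tsum]
  exact (Equiv.mulLeft g⁻¹).tsum_eq fun i =>
    inner ℂ ((x : ∀ _ : G, ℂ) i) ((y : ∀ _ : G, ℂ) i)

lemma star_T (g : G) : star (T g) = T g⁻¹ := by
  rw [ContinuousLinearMap.star_eq_adjoint]
  symm
  rw [ContinuousLinearMap.eq_adjoint_iff]
  intro x y
  calc ⟪T g⁻¹ x, y⟫_ℂ = ⟪T g (T g⁻¹ x), T g y⟫_ℂ := (inner_T g _ _).symm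
    _ = ⟪x, T g y⟫_ℂ := by
        rw [show T g (T g⁻¹ x) = (T g * T g⁻¹) x from rfl, T_mul, mul_inv_cancel, T_one]
        rfl

lemma T_unitary (g : G) : T g ∈ unitary (Hs G →L[ℂ] Hs G) := by
  constructor
  · rw [star_T, T_mul, inv_mul_cancel, T_one]
  · rw [star_T, T_mul, mul_inv_cancel, T_one]

/-- left regular representation as a monoid hom -/
def Tm : G →* (Hs G →L[ℂ] Hs G) where
  toFun := T
  map_one' := T_one
  map_mul' g g' := (T_mul g g').symm

lemma single_apply' [DecidableEq G] (i j : G) (a : ℂ) :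
    (lp.single 2 i a : Hs G) j = if j = i then a else 0 := by
  rcases eq_or_ne j i with rfl | h
  · rw [lp.single_apply, Pi.single_eq_same, if_pos rfl]
  · rw [lp.single_apply, Pi.single_eq_of_ne h, if_neg h]

lemma T_single (g : G) [DecidableEq G] :
    T g (lp.single 2 (1 : G) (1 : ℂ)) = lp.single 2 g (1 : ℂ) := by
  apply lp.ext
  funext h
  rw [T_apply]
  rw [single_apply', single_apply']
  by_cases hh : h = g
  · rw [if_pos (by rw [hh, inv_mul_cancel]), if_pos hh]
  · rw [if_neg (fun hc => hh ((inv_mul_eq_one.mp hc).symm)), if_neg hh]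

/-- the induced algebra hom on the group algebra -/
def piRep : MonoidAlgebra ℂ G →ₐ[ℂ] (Hs G →L[ℂ] Hs G) :=
  MonoidAlgebra.lift ℂ _ G Tm

lemma piRep_single (g : G) : piRep (MonoidAlgebra.single g (1 : ℂ)) = T g := by
  show (MonoidAlgebra.lift ℂ (Hs G →L[ℂ] Hs G) G) Tm (MonoidAlgebra.single g 1) = T g
  rw [MonoidAlgebra.lift_single, one_smul]
  rfl

lemma piRep_injective : Function.Injective (piRep (G := G)) := by
  classical
  rw [injective_iff_map_eq_zero]
  intro m hm
  refine MonoidAlgebra.ext <| Finsupp.ext fun h => ?_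
  have h0 : (MonoidAlgebra.lift ℂ (Hs G →L[ℂ] Hs G) G) Tm m (lp.single 2 (1 : G) (1 : ℂ)) = 0 := by
    rw [show (MonoidAlgebra.lift ℂ (Hs G →L[ℂ] Hs G) G) Tm m = piRep m from rfl, hm]
    rfl
  rw [MonoidAlgebra.lift_apply] at h0
  have h1 : (Finsupp.sum m.coeff fun g c => c • Tm g) (lp.single 2 (1 : G) (1 : ℂ))
      = ∑ g ∈ m.coeff.support, m.coeff g • lp.single 2 g (1 : ℂ) := by
    rw [Finsupp.sum, ContinuousLinearMap.sum_apply]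
    refine Finset.sum_congr rfl fun g _ => ?_
    rw [ContinuousLinearMap.smul_apply]
    congr 1
    exact T_single g
  rw [h1] at h0
  have h2 : ((∑ g ∈ m.coeff.support, m.coeff g • lp.single 2 g (1 : ℂ) : Hs G) : ∀ _ : G, ℂ) h = 0 := by
    rw [h0]; rfl
  rw [lp.coeFn_sum, Finset.sum_apply] at h2
  simp only [lp.coeFn_smul, Pi.smul_apply, smul_eq_mul] at h2
  by_cases hh : h ∈ m.coeff.support
  · rw [Finset.sum_eq_single_of_mem h hh] at h2
    · rw [single_apply', if_pos rfl, mul_one] at h2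
      exact h2
    · intro g _ hg
      rw [single_apply', if_neg (Ne.symm hg), mul_zero]
  · exact Finsupp.notMem_support_iff.mp hh


end Rep


variable {X : Type}

lemma gen_inl_true (x : X) : gen (Sum.inl x) true = FreeGroup.of (Sum.inl x) := rfl
lemma gen_inl_false (x : X) : gen (Sum.inl x) false = FreeGroup.of (Sum.inr x) := rfl
lemma gen_inr_true (x : X) : gen (Sum.inr x) true = (FreeGroup.of (Sum.inl x))⁻¹ := by
  rw [show FreeGroup.of (Sum.inl x) = FreeGroup.mk [(Sum.inl x, true)] from rfl,
    FreeGroup.inv_mk]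
  rfl
lemma gen_inr_false (x : X) : gen (Sum.inr x) false = (FreeGroup.of (Sum.inr x))⁻¹ := by
  rw [show FreeGroup.of (Sum.inr x) = FreeGroup.mk [(Sum.inr x, true)] from rfl,
    FreeGroup.inv_mk]
  rfl

instance : Nontrivial (lp (fun _ : FreeGroup (X ⊕ X) => ℂ) 2) := by
  classical
  refine ⟨0, lp.single 2 (1 : FreeGroup (X ⊕ X)) (1 : ℂ), fun hc => ?_⟩
  have h1 : ((lp.single 2 (1 : FreeGroup (X ⊕ X)) (1 : ℂ) :
      lp (fun _ : FreeGroup (X ⊕ X) => ℂ) 2) : ∀ _ : FreeGroup (X ⊕ X), ℂ) 1 = (0 : ℂ) := by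
    rw [← hc]; rfl
  rw [lp.single_apply, Pi.single_eq_same] at h1
  exact one_ne_zero h1

end GM
end

set_option maxHeartbeats 2000000 in
/-- Let `U` be the full group C*-algebra of the free group on two copies
`{ẋ}, {x̄}` of a set `X` — i.e. a unital C*-algebra with unitaries
`u x = ẋ`, `v x = x̄` that is universal for such families of unitaries.  Then
the *-homomorphism `φ` from the free *-algebra `ℂ[X ∪ X*]` (modelled as
`FreeAlgebra ℂ (X ⊕ X)`) determined by `φ(x) = ẋ + x̄` (so
`φ(x*) = ẋ⁻¹ + x̄⁻¹ = (ẋ + x̄)*`) is injective. -/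
theorem goodearl_menal_map_injective
    {X : Type} {U : Type}
    [NormedRing U] [StarRing U] [CStarRing U] [NormedAlgebra ℂ U]
    [StarModule ℂ U] [CompleteSpace U]
    (u v : X → unitary U)
    (huniv : ∀ (A : Type) (_ : NormedRing A) (_ : StarRing A) (_ : CStarRing A)
      (_ : NormedAlgebra ℂ A) (_ : StarModule ℂ A) (_ : CompleteSpace A)
      (a b : X → unitary A),
      ∃! φ : U →⋆ₐ[ℂ] A, ∀ x, φ ((u x : U)) = (a x : A) ∧ φ ((v x : U)) = (b x : A)) :
    Function.Injective
      (FreeAlgebra.lift ℂ (Sum.elim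
        (fun x : X => (u x : U) + (v x : U))
        (fun x : X => star ((u x : U)) + star ((v x : U))))) := by
  letI : DecidableEq (X ⊕ X) := Classical.decEq _
  set f : X ⊕ X → U := Sum.elim
    (fun x : X => (u x : U) + (v x : U))
    (fun x : X => star ((u x : U)) + star ((v x : U))) with hf
  set A := (lp (fun _ : FreeGroup (X ⊕ X) => ℂ) 2 →L[ℂ]
    lp (fun _ : FreeGroup (X ⊕ X) => ℂ) 2) with hA
  obtain ⟨ρ, hρ, -⟩ := huniv A inferInstance inferInstance inferInstance inferInstance
    inferInstance inferInstance
    (fun x => ⟨GM.T (FreeGroup.of (Sum.inl x)), GM.T_unitary _⟩)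
    (fun x => ⟨GM.T (FreeGroup.of (Sum.inr x)), GM.T_unitary _⟩)
  set eqv := FreeAlgebra.equivMonoidAlgebraFreeMonoid (R := ℂ) (X := X ⊕ X) with heqv
  set liftPhi := MonoidAlgebra.lift ℂ (MonoidAlgebra ℂ (FreeGroup (X ⊕ X)))
    (FreeMonoid (X ⊕ X)) GM.Phi with hliftPhi
  set ψ : FreeAlgebra ℂ (X ⊕ X) →ₐ[ℂ] A :=
    ((GM.piRep (G := FreeGroup (X ⊕ X))).comp liftPhi).comp eqv.toAlgHom with hψ
  -- ψ on generators
  have hψι : ∀ s : X ⊕ X, ψ (FreeAlgebra.ι ℂ s) =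
      GM.T (GM.gen s true) + GM.T (GM.gen s false) := by
    intro s
    have h1 : eqv (FreeAlgebra.ι ℂ s)
        = MonoidAlgebra.single (FreeMonoid.of s) (1 : ℂ) := by
      rw [heqv]
      simp [FreeAlgebra.equivMonoidAlgebraFreeMonoid, MonoidAlgebra.of_apply]
    have h2 : ψ (FreeAlgebra.ι ℂ s) = GM.piRep (liftPhi (eqv (FreeAlgebra.ι ℂ s))) := rfl
    rw [h2, h1, hliftPhi, MonoidAlgebra.lift_single, one_smul]
    rw [show GM.Phi (FreeMonoid.of s) = MonoidAlgebra.single (GM.gen s true) 1 +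
      MonoidAlgebra.single (GM.gen s false) 1 from FreeMonoid.lift_eval_of _ s]
    rw [map_add, GM.piRep_single, GM.piRep_single]
  -- ρ ∘ (lift f) = ψ
  have hcomp : ρ.toAlgHom.comp (FreeAlgebra.lift ℂ f) = ψ := by
    apply FreeAlgebra.hom_ext
    funext s
    show ρ (FreeAlgebra.lift ℂ f (FreeAlgebra.ι ℂ s)) = ψ (FreeAlgebra.ι ℂ s)
    rw [FreeAlgebra.lift_ι_apply, hψι s]
    cases s with
    | inl x =>
      rw [hf]
      simp only [Sum.elim_inl]
      rw [map_add, (hρ x).1, (hρ x).2, GM.gen_inl_true, GM.gen_inl_false]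
    | inr x =>
      rw [hf]
      simp only [Sum.elim_inr]
      rw [map_add, map_star, map_star, (hρ x).1, (hρ x).2,
        GM.gen_inr_true, GM.gen_inr_false]
      show star (GM.T (FreeGroup.of (Sum.inl x))) + star (GM.T (FreeGroup.of (Sum.inr x))) = _
      rw [GM.star_T, GM.star_T]
  -- conclude
  intro z₁ z₂ hz
  have h₁ : ψ z₁ = ψ z₂ := by
    rw [← hcomp]
    simp only [AlgHom.comp_apply, StarAlgHom.coe_toAlgHom]
    rw [hz]
  have h₂ : liftPhi (eqv z₁) = liftPhi (eqv z₂) := GM.piRep_injective h₁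
  exact eqv.injective (GM.liftPhi_injective h₂)
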